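/- Let v ≥ 1 and let {T_0,…,T_{v−1}} be a uniform decomposition of a VOA(U_{2,3}, v) T, with T_i induced by subsets A_i, B_i ⊆ {0,…,v−1} satisfying |A_i|·|B_i| = v, each symbol appearing exactly once in the third column of T_i, and the sets A_i × B_i partitioning {0,…,v−1}². Then the pair (a, b) with a = log v − (1/v)·Σ_i log|B_i| and b = log v − (1/v)·Σ_i log|A_i| is entropic on the cone spanned by the rank functions of the wheel matroids W^{12}_2 and W^{13}_2: there exists a random vector (X1,X2,X3,X4) with entropy function a·r1 + b·r2. -/
import Mathlib


open Finset
open scoped BigOperators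
noncomputable section

/-- Probability that the `A`-marginal of the random vector with joint pmf `p`
takes the same value as on `x`. -/
def margProb {n : ℕ} {m : Fin n → ℕ} (p : (∀ i, Fin (m i)) → ℝ)
    (A : Finset (Fin n)) (x : ∀ i, Fin (m i)) : ℝ :=
  ∑ y : ∀ i, Fin (m i), if ∀ i ∈ A, y i = x i then p y else 0

/-- The Shannon entropy `H(X_A)` of the subvector indexed by `A`, for the random
vector with joint pmf `p`. -/
def jointEntropy {n : ℕ} {m : Fin n → ℕ} (p : (∀ i, Fin (m i)) → ℝ)
    (A : Finset (Fin n)) : ℝ :=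
  -∑ x : ∀ i, Fin (m i), p x * Real.log (margProb p A x)

/-- `p` is a probability mass function. -/
def IsPMF {α : Type*} [Fintype α] (p : α → ℝ) : Prop :=
  (∀ x, 0 ≤ p x) ∧ ∑ x, p x = 1

/-- `h` is an entropy function of degree `n`: it arises as `A ↦ H(X_A)` for a
random vector `(X_1, …, X_n)` on finite sets. -/
def IsEntropyFunc (n : ℕ) (h : Finset (Fin n) → ℝ) : Prop :=
  ∃ (m : Fin n → ℕ) (p : (∀ i, Fin (m i)) → ℝ), IsPMF p ∧ ∀ A, jointEntropy p A = h A

/-- Marginal probability of the single coordinate `i` taking value `x`. -/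
def marg1 {n : ℕ} {m : Fin n → ℕ} (p : (∀ i, Fin (m i)) → ℝ)
    (i : Fin n) (x : Fin (m i)) : ℝ :=
  ∑ y : ∀ j, Fin (m j), if y i = x then p y else 0

/-- Marginal probability of the pair of coordinates `(i, j)` taking values `(x, y)`. -/
def marg2 {n : ℕ} {m : Fin n → ℕ} (p : (∀ i, Fin (m i)) → ℝ)
    (i j : Fin n) (x : Fin (m i)) (y : Fin (m j)) : ℝ :=
  ∑ z : ∀ k, Fin (m k), if z i = x ∧ z j = y then p z else 0

/-- `T` is a `VOA(U_{2,3}, v)`: every ordered pair of symbols occurs exactly once in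
each pair of distinct columns. -/
def IsVOA23 (v : ℕ) (T : Fin (v ^ 2) → Fin 3 → Fin v) : Prop :=
  ∀ j k : Fin 3, j ≠ k → ∀ a b : Fin v,
    (Finset.univ.filter (fun r => T r j = a ∧ T r k = b)).card = 1

/-- Rank function of the wheel matroid `W^{12}_2` (indices `0,1` parallel). -/
def rW12 (A : Finset (Fin 4)) : ℝ :=
  if A = ∅ then 0 else if A ⊆ ({0, 1} : Finset (Fin 4)) then 1 else min 2 (A.card : ℝ)

/-- Rank function of the wheel matroid `W^{13}_2` (indices `0,2` parallel). -/
def rW13 (A : Finset (Fin 4)) : ℝ :=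
  if A = ∅ then 0 else if A ⊆ ({0, 2} : Finset (Fin 4)) then 1 else min 2 (A.card : ℝ)

set_option maxHeartbeats 2000000 in
/-- Given a uniform decomposition `{T_0, …, T_{v-1}}` of a `VOA(U_{2,3}, v)` `T`
(each `T_i` induced by `A_i, B_i` with `|A_i|·|B_i| = v`, the sets `A_i × B_i`
partitioning `{0,…,v−1}²`, and each symbol occurring exactly once in the third
column of each `T_i`), the pair `(a, b)` with `a = log v − (1/v) Σ_i log |B_i|` and
`b = log v − (1/v) Σ_i log |A_i|` is entropic on the cone spanned by the rank
functions of `W^{12}_2` and `W^{13}_2`. -/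
theorem statement14 (v : ℕ) (hv : 1 ≤ v)
    (T : Fin (v ^ 2) → Fin 3 → Fin v) (hT : IsVOA23 v T)
    (A B : Fin v → Finset (Fin v))
    (hcard : ∀ i, (A i).card * (B i).card = v)
    (hpart : ∀ x y : Fin v, ∃! i : Fin v, x ∈ A i ∧ y ∈ B i)
    (hunit : ∀ (i : Fin v) (s : Fin v),
      (Finset.univ.filter (fun r => T r 0 ∈ A i ∧ T r 1 ∈ B i ∧ T r 2 = s)).card = 1) :
    ∃ (m : Fin 4 → ℕ) (p : (∀ i, Fin (m i)) → ℝ), IsPMF p ∧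
      ∀ S : Finset (Fin 4), jointEntropy p S =
        (Real.log v - (v : ℝ)⁻¹ * ∑ i, Real.log ((B i).card : ℝ)) * rW12 S +
        (Real.log v - (v : ℝ)⁻¹ * ∑ i, Real.log ((A i).card : ℝ)) * rW13 S := by
  classical
  have hv0 : (0:ℝ) < v := by exact_mod_cast hv
  have hv2 : ((v:ℝ)^2) ≠ 0 := by positivity
  -- unique rows for each pair of columns
  have huniqrow : ∀ (j k : Fin 3), j ≠ k → ∀ a b : Fin v,
      ∃! r : Fin (v^2), T r j = a ∧ T r k = b := by
    intro j k hjk a b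
    have h := hT j k hjk a b
    rw [Finset.card_eq_one] at h
    obtain ⟨r, hr⟩ := h
    have hrmem : r ∈ Finset.univ.filter (fun r => T r j = a ∧ T r k = b) := by
      rw [hr]; exact Finset.mem_singleton_self r
    refine ⟨r, by simpa using hrmem, ?_⟩
    intro r' hr'
    have h2 : r' ∈ Finset.univ.filter (fun r => T r j = a ∧ T r k = b) := by
      simp only [Finset.mem_filter, Finset.mem_univ, true_and]; exact hr'
    rw [hr] at h2; simpa using h2
  choose row hrowP hrowU using fun x y => huniqrow 0 1 (by decide) x y
  choose sig hsigP hsigU using hpart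
  set τ : Fin v → Fin v → Fin v := fun x y => T (row x y) 2 with hτdef
  -- the support map
  set f : Fin v × Fin v → (Fin 4 → Fin v) := fun w i =>
    if i = 0 then sig w.1 w.2 else if i = 1 then w.2 else if i = 2 then w.1
      else τ w.1 w.2 with hfdef
  have hf0 : ∀ w, f w 0 = sig w.1 w.2 := fun w => rfl
  have hf1 : ∀ w, f w 1 = w.2 := fun w => rfl
  have hf2 : ∀ w, f w 2 = w.1 := fun w => rfl
  have hf3 : ∀ w, f w 3 = τ w.1 w.2 := fun w => rfl
  set p : (Fin 4 → Fin v) → ℝ := fun z =>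
    ((v:ℝ)^2)⁻¹ * ((Finset.univ.filter (fun w => f w = z)).card : ℝ) with hpdef
  -- reindexing lemma
  have hre : ∀ g : (Fin 4 → Fin v) → ℝ,
      ∑ z : Fin 4 → Fin v, ((Finset.univ.filter (fun w => f w = z)).card : ℝ) * g z
        = ∑ w : Fin v × Fin v, g (f w) := by
    intro g
    have h1 : ∀ z : Fin 4 → Fin v,
        ((Finset.univ.filter (fun w => f w = z)).card : ℝ) * g z
        = ∑ w : Fin v × Fin v, if f w = z then g z else 0 := by
      intro z
      rw [Finset.card_filter]
      push_cast
      rw [Finset.sum_mul]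
      refine Finset.sum_congr rfl fun w _ => ?_
      split <;> simp
    simp_rw [h1]
    rw [Finset.sum_comm]
    refine Finset.sum_congr rfl fun w _ => ?_
    simp
  have hcardprod : (Fintype.card (Fin v × Fin v) : ℝ) = (v:ℝ)^2 := by
    simp [Fintype.card_prod]; ring
  -- counts
  set N : Finset (Fin 4) → (Fin v × Fin v) → ℕ := fun S w =>
    (Finset.univ.filter (fun w' => ∀ i ∈ S, f w' i = f w i)).card with hNdef
  have hNpos : ∀ S w, 0 < N S w := by
    intro S w
    apply Finset.card_pos.mpr
    exact ⟨w, by simp⟩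
  -- marginal formula
  have hmarg : ∀ (S : Finset (Fin 4)) (z : Fin 4 → Fin v),
      margProb p S z = ((v:ℝ)^2)⁻¹ *
        ((Finset.univ.filter (fun w => ∀ i ∈ S, f w i = z i)).card : ℝ) := by
    intro S z
    have h1 : margProb p S z = ∑ y : Fin 4 → Fin v,
        ((Finset.univ.filter (fun w => f w = y)).card : ℝ) *
          (((v:ℝ)^2)⁻¹ * (if ∀ i ∈ S, y i = z i then 1 else 0)) := by
      refine Finset.sum_congr rfl fun y _ => ?_
      rw [hpdef]
      split <;> ring
    rw [h1, hre]
    rw [← Finset.mul_sum]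
    congr 1
    rw [Finset.card_filter]
    push_cast
    rfl
  -- master entropy formula
  have hJE : ∀ S : Finset (Fin 4), jointEntropy p S
      = 2 * Real.log v - ((v:ℝ)^2)⁻¹ * ∑ w : Fin v × Fin v, Real.log (N S w) := by
    intro S
    have h1 : jointEntropy p S = -∑ z : Fin 4 → Fin v,
        ((Finset.univ.filter (fun w => f w = z)).card : ℝ) *
          (((v:ℝ)^2)⁻¹ * Real.log (margProb p S z)) := by
      unfold jointEntropy
      congr 1
      refine Finset.sum_congr rfl fun z _ => ?_
      rw [hpdef]; ring
    rw [h1, hre]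
    have h2 : ∀ w : Fin v × Fin v,
        ((v:ℝ)^2)⁻¹ * Real.log (margProb p S (f w))
          = ((v:ℝ)^2)⁻¹ * (Real.log (N S w) - 2 * Real.log v) := by
      intro w
      congr 1
      rw [hmarg]
      have hN0 : ((N S w : ℝ)) ≠ 0 := by
        exact_mod_cast (hNpos S w).ne'
      rw [Real.log_mul (by positivity) (by exact_mod_cast hN0), Real.log_inv,
        Real.log_pow]
      push_cast
      ring
    simp_rw [h2]
    rw [← Finset.mul_sum, Finset.sum_sub_distrib, Finset.sum_const,
      Finset.card_univ, nsmul_eq_mul]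
    rw [hcardprod]
    field_simp
    ring

  -- basic facts about sig
  have hvne : (v:ℝ) ≠ 0 := hv0.ne'
  have hv22 : ∀ t : ℝ, ((v:ℝ)^2)⁻¹ * ((v:ℝ)^2 * t) = t := fun t => inv_mul_cancel_left₀ hv2 t
  have hv21 : ∀ t : ℝ, ((v:ℝ)^2)⁻¹ * ((v:ℝ) * t) = (v:ℝ)⁻¹ * t := by
    intro t
    rw [sq, mul_inv, mul_assoc, inv_mul_cancel_left₀ hvne]
  have hsumconst : ∀ c : ℝ, (∑ _w : Fin v × Fin v, c) = (v:ℝ)^2 * c := by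
    intro c
    rw [Finset.sum_const, Finset.card_univ]
    simp only [Fintype.card_prod, Fintype.card_fin, nsmul_eq_mul]
    push_cast
    ring
  have hsig_iff : ∀ (x y i : Fin v), sig x y = i ↔ x ∈ A i ∧ y ∈ B i := by
    intro x y i
    constructor
    · rintro rfl; exact hsigP x y
    · intro h; exact (hsigU x y i h).symm
  have hsigfib : ∀ i : Fin v,
      (Finset.univ.filter fun w : Fin v × Fin v => sig w.1 w.2 = i) = A i ×ˢ B i := by
    intro i
    ext ⟨a, b⟩
    simp only [Finset.mem_filter, Finset.mem_univ, true_and, Finset.mem_product]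
    exact hsig_iff a b i
  -- the unique-in-Ti hypothesis, in existential form
  have hunit' : ∀ i s : Fin v, ∃! r : Fin (v^2), T r 0 ∈ A i ∧ T r 1 ∈ B i ∧ T r 2 = s := by
    intro i s
    have h := hunit i s
    rw [Finset.card_eq_one] at h
    obtain ⟨r, hr⟩ := h
    have hrmem : r ∈ Finset.univ.filter (fun r => T r 0 ∈ A i ∧ T r 1 ∈ B i ∧ T r 2 = s) := by
      rw [hr]; exact Finset.mem_singleton_self r
    refine ⟨r, by simpa using hrmem, ?_⟩
    intro r' hr'
    have h2 : r' ∈ Finset.univ.filter (fun r => T r 0 ∈ A i ∧ T r 1 ∈ B i ∧ T r 2 = s) := by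
      simp only [Finset.mem_filter, Finset.mem_univ, true_and]; exact hr'
    rw [hr] at h2; simpa using h2
  -- third-column function is a "Latin" function
  have htauU : ∀ (x s : Fin v), ∃! y : Fin v, T (row x y) 2 = s := by
    intro x s
    obtain ⟨r0, hr0, hr0u⟩ := huniqrow 0 2 (by decide) x s
    refine ⟨T r0 1, ?_, ?_⟩
    · have hrr : row x (T r0 1) = r0 := (hrowU x (T r0 1) r0 ⟨hr0.1, rfl⟩).symm
      show T (row x (T r0 1)) 2 = s
      rw [hrr]; exact hr0.2
    · intro y hy
      have h1 : row x y = r0 := hr0u _ ⟨(hrowP x y).1, hy⟩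
      rw [← (hrowP x y).2, h1]
  choose g hgP hgU using htauU
  -- ===================== counting lemmas =====================
  have hNe : ∀ w, N (∅ : Finset (Fin 4)) w = v * v := by
    intro w
    simp only [hNdef]
    rw [show (Finset.univ.filter fun w' : Fin v × Fin v =>
        ∀ i ∈ (∅ : Finset (Fin 4)), f w' i = f w i) = Finset.univ from by simp]
    rw [Finset.card_univ]
    simp [Fintype.card_prod]
  have hN0 : ∀ w, N ({0} : Finset (Fin 4)) w = v := by
    intro w
    simp only [hNdef]
    have hset : (Finset.univ.filter fun w' : Fin v × Fin v =>
        ∀ i ∈ ({0} : Finset (Fin 4)), f w' i = f w i)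
        = A (sig w.1 w.2) ×ˢ B (sig w.1 w.2) := by
      ext ⟨a, b⟩
      simp only [Finset.mem_filter, Finset.mem_univ, true_and, Finset.mem_singleton,
        forall_eq, Finset.mem_product, hf0]
      exact hsig_iff a b _
    rw [hset, Finset.card_product, hcard]
  have hN1' : ∀ w, N ({1} : Finset (Fin 4)) w = v := by
    intro w
    simp only [hNdef]
    have hset : (Finset.univ.filter fun w' : Fin v × Fin v =>
        ∀ i ∈ ({1} : Finset (Fin 4)), f w' i = f w i)
        = (Finset.univ : Finset (Fin v)) ×ˢ ({w.2} : Finset (Fin v)) := by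
      ext ⟨a, b⟩
      simp only [Finset.mem_filter, Finset.mem_univ, true_and, Finset.mem_singleton,
        forall_eq, Finset.mem_product, hf1]
    rw [hset, Finset.card_product, Finset.card_singleton, Finset.card_univ,
      Fintype.card_fin, mul_one]
  have hN2' : ∀ w, N ({2} : Finset (Fin 4)) w = v := by
    intro w
    simp only [hNdef]
    have hset : (Finset.univ.filter fun w' : Fin v × Fin v =>
        ∀ i ∈ ({2} : Finset (Fin 4)), f w' i = f w i)
        = ({w.1} : Finset (Fin v)) ×ˢ (Finset.univ : Finset (Fin v)) := by
      ext ⟨a, b⟩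
      simp only [Finset.mem_filter, Finset.mem_univ, true_and, Finset.mem_singleton,
        forall_eq, Finset.mem_product, hf2]
      tauto
    rw [hset, Finset.card_product, Finset.card_singleton, Finset.card_univ,
      Fintype.card_fin, one_mul]
  have hN3' : ∀ w, N ({3} : Finset (Fin 4)) w = v := by
    intro w
    simp only [hNdef]
    have hset : (Finset.univ.filter fun w' : Fin v × Fin v =>
        ∀ i ∈ ({3} : Finset (Fin 4)), f w' i = f w i)
        = Finset.univ.image (fun x' => (x', g x' (T (row w.1 w.2) 2))) := by
      ext ⟨a, b⟩
      simp only [Finset.mem_filter, Finset.mem_univ, true_and, Finset.mem_singleton,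
        forall_eq, Finset.mem_image, hf3, Prod.mk.injEq]
      constructor
      · intro h
        exact ⟨a, rfl, (hgU a _ b h).symm⟩
      · rintro ⟨x', rfl, rfl⟩
        exact hgP x' _
    rw [hset, Finset.card_image_of_injective _ (fun a b hab => congrArg Prod.fst hab),
      Finset.card_univ, Fintype.card_fin]
  -- singleton-filter helper
  have hsingle : ∀ (S : Finset (Fin 4)) (w : Fin v × Fin v),
      (∀ w', (∀ i ∈ S, f w' i = f w i) → w' = w) → N S w = 1 := by
    intro S w h
    simp only [hNdef]
    have hset : (Finset.univ.filter fun w' : Fin v × Fin v => ∀ i ∈ S, f w' i = f w i)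
        = {w} := by
      apply Finset.eq_singleton_iff_unique_mem.mpr
      refine ⟨Finset.mem_filter.mpr ⟨Finset.mem_univ w, fun i _ => rfl⟩, ?_⟩
      intro w' hw'
      exact h w' (Finset.mem_filter.mp hw').2
    rw [hset, Finset.card_singleton]
  have hN12 : ∀ w, N ({1, 2} : Finset (Fin 4)) w = 1 := by
    rintro ⟨x, y⟩
    apply hsingle
    rintro ⟨a, b⟩ h
    have hb : b = y := by simpa [hf1] using h 1 (by decide)
    have ha : a = x := by simpa [hf2] using h 2 (by decide)
    rw [ha, hb]
  have hN13 : ∀ w, N ({1, 3} : Finset (Fin 4)) w = 1 := by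
    rintro ⟨x, y⟩
    apply hsingle
    rintro ⟨a, b⟩ h
    have hb : b = y := by simpa [hf1] using h 1 (by decide)
    have ht : T (row a b) 2 = T (row x y) 2 := by simpa [hf3] using h 3 (by decide)
    obtain ⟨r0, _hr0, hu⟩ := huniqrow 1 2 (by decide) y (T (row x y) 2)
    have hra : row a b = r0 := hu _ ⟨by rw [(hrowP a b).2, hb], ht⟩
    have hrx : row x y = r0 := hu _ ⟨(hrowP x y).2, rfl⟩
    have ha : a = x := by
      rw [← (hrowP a b).1, ← (hrowP x y).1, hra, hrx]
    rw [ha, hb]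
  have hN23 : ∀ w, N ({2, 3} : Finset (Fin 4)) w = 1 := by
    rintro ⟨x, y⟩
    apply hsingle
    rintro ⟨a, b⟩ h
    have ha : a = x := by simpa [hf2] using h 2 (by decide)
    have ht : T (row a b) 2 = T (row x y) 2 := by simpa [hf3] using h 3 (by decide)
    obtain ⟨r0, _hr0, hu⟩ := huniqrow 0 2 (by decide) x (T (row x y) 2)
    have hra : row a b = r0 := hu _ ⟨by rw [(hrowP a b).1, ha], ht⟩
    have hrx : row x y = r0 := hu _ ⟨(hrowP x y).1, rfl⟩
    have hb : b = y := by
      rw [← (hrowP a b).2, ← (hrowP x y).2, hra, hrx]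
    rw [ha, hb]
  have hN03 : ∀ w, N ({0, 3} : Finset (Fin 4)) w = 1 := by
    rintro ⟨x, y⟩
    apply hsingle
    rintro ⟨a, b⟩ h
    have hs : sig a b = sig x y := by simpa [hf0] using h 0 (by decide)
    have ht : T (row a b) 2 = T (row x y) 2 := by simpa [hf3] using h 3 (by decide)
    obtain ⟨r0, _hr0, hu⟩ := hunit' (sig x y) (T (row x y) 2)
    have hmemA : a ∈ A (sig x y) := by rw [← hs]; exact (hsigP a b).1
    have hmemB : b ∈ B (sig x y) := by rw [← hs]; exact (hsigP a b).2
    have hra : row a b = r0 := by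
      apply hu
      refine ⟨?_, ?_, ht⟩
      · rw [(hrowP a b).1]; exact hmemA
      · rw [(hrowP a b).2]; exact hmemB
    have hrx : row x y = r0 := by
      apply hu
      exact ⟨by rw [(hrowP x y).1]; exact (hsigP x y).1,
        by rw [(hrowP x y).2]; exact (hsigP x y).2, rfl⟩
    have ha : a = x := by rw [← (hrowP a b).1, ← (hrowP x y).1, hra, hrx]
    have hb : b = y := by rw [← (hrowP a b).2, ← (hrowP x y).2, hra, hrx]
    rw [ha, hb]
  have hN01 : ∀ w, N ({0, 1} : Finset (Fin 4)) w = (A (sig w.1 w.2)).card := by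
    rintro ⟨x, y⟩
    simp only [hNdef]
    have hset : (Finset.univ.filter fun w' : Fin v × Fin v =>
        ∀ i ∈ ({0, 1} : Finset (Fin 4)), f w' i = f (x, y) i)
        = A (sig x y) ×ˢ ({y} : Finset (Fin v)) := by
      ext ⟨a, b⟩
      simp only [Finset.mem_filter, Finset.mem_univ, true_and, Finset.mem_insert,
        Finset.mem_singleton, forall_eq_or_imp, forall_eq, Finset.mem_product, hf0, hf1]
      constructor
      · rintro ⟨h0, h1⟩
        exact ⟨by rw [← h0]; exact (hsigP a b).1, h1⟩
      · rintro ⟨ha, rfl⟩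
        exact ⟨(hsig_iff a b _).mpr ⟨ha, (hsigP x b).2⟩, rfl⟩
    rw [hset, Finset.card_product, Finset.card_singleton, mul_one]
  have hN02 : ∀ w, N ({0, 2} : Finset (Fin 4)) w = (B (sig w.1 w.2)).card := by
    rintro ⟨x, y⟩
    simp only [hNdef]
    have hset : (Finset.univ.filter fun w' : Fin v × Fin v =>
        ∀ i ∈ ({0, 2} : Finset (Fin 4)), f w' i = f (x, y) i)
        = ({x} : Finset (Fin v)) ×ˢ B (sig x y) := by
      ext ⟨a, b⟩
      simp only [Finset.mem_filter, Finset.mem_univ, true_and, Finset.mem_insert,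
        Finset.mem_singleton, forall_eq_or_imp, forall_eq, Finset.mem_product, hf0, hf2]
      constructor
      · rintro ⟨h0, h1⟩
        exact ⟨h1, by rw [← h0]; exact (hsigP a b).2⟩
      · rintro ⟨rfl, hb⟩
        exact ⟨(hsig_iff a b _).mpr ⟨(hsigP a y).1, hb⟩, rfl⟩
    rw [hset, Finset.card_product, Finset.card_singleton, one_mul]
  have hNmono : ∀ (S S' : Finset (Fin 4)) w, S ⊆ S' → N S w = 1 → N S' w = 1 := by
    intro S S' w hss h1
    have hpos := hNpos S' w
    have hle : N S' w ≤ N S w := by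
      simp only [hNdef]
      apply Finset.card_le_card
      intro w' hw'
      simp only [Finset.mem_filter, Finset.mem_univ, true_and] at hw' ⊢
      exact fun i hi => hw' i (hss hi)
    omega
  -- ===================== fiber sums =====================
  have hfiberA : ∑ w : Fin v × Fin v, Real.log ((A (sig w.1 w.2)).card : ℝ)
      = ∑ i : Fin v, (v:ℝ) * Real.log ((A i).card : ℝ) := by
    rw [← Finset.sum_fiberwise Finset.univ (fun w : Fin v × Fin v => sig w.1 w.2)
      (fun w => Real.log ((A (sig w.1 w.2)).card : ℝ))]
    refine Finset.sum_congr rfl fun i _ => ?_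
    rw [Finset.sum_congr rfl (fun w hw => by
      rw [(Finset.mem_filter.mp hw).2] :
      ∀ w ∈ Finset.univ.filter (fun w : Fin v × Fin v => sig w.1 w.2 = i),
        Real.log ((A (sig w.1 w.2)).card : ℝ) = Real.log ((A i).card : ℝ))]
    rw [Finset.sum_const, hsigfib, Finset.card_product, hcard, nsmul_eq_mul]
  have hfiberB : ∑ w : Fin v × Fin v, Real.log ((B (sig w.1 w.2)).card : ℝ)
      = ∑ i : Fin v, (v:ℝ) * Real.log ((B i).card : ℝ) := by
    rw [← Finset.sum_fiberwise Finset.univ (fun w : Fin v × Fin v => sig w.1 w.2)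
      (fun w => Real.log ((B (sig w.1 w.2)).card : ℝ))]
    refine Finset.sum_congr rfl fun i _ => ?_
    rw [Finset.sum_congr rfl (fun w hw => by
      rw [(Finset.mem_filter.mp hw).2] :
      ∀ w ∈ Finset.univ.filter (fun w : Fin v × Fin v => sig w.1 w.2 = i),
        Real.log ((B (sig w.1 w.2)).card : ℝ) = Real.log ((B i).card : ℝ))]
    rw [Finset.sum_const, hsigfib, Finset.card_product, hcard, nsmul_eq_mul]
  -- ===================== the key sum identity =====================
  have hA1 : ∀ i, 0 < (A i).card := by
    intro i
    rcases Nat.eq_zero_or_pos (A i).card with h | h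
    · exfalso; have hc := hcard i; rw [h, zero_mul] at hc; omega
    · exact h
  have hB1 : ∀ i, 0 < (B i).card := by
    intro i
    rcases Nat.eq_zero_or_pos (B i).card with h | h
    · exfalso; have hc := hcard i; rw [h, mul_zero] at hc; omega
    · exact h
  have hsum' : (v:ℝ)⁻¹ * (∑ i, Real.log ((B i).card : ℝ))
      + (v:ℝ)⁻¹ * (∑ i, Real.log ((A i).card : ℝ)) = Real.log (v:ℝ) := by
    have h1 : ∀ i : Fin v, Real.log ((B i).card : ℝ) + Real.log ((A i).card : ℝ)
        = Real.log (v:ℝ) := by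
      intro i
      rw [← Real.log_mul (by exact_mod_cast (hB1 i).ne') (by exact_mod_cast (hA1 i).ne')]
      congr 1
      rw [← Nat.cast_mul, mul_comm, hcard i]
    have h2 : (∑ i, Real.log ((B i).card : ℝ)) + (∑ i, Real.log ((A i).card : ℝ))
        = (v:ℝ) * Real.log (v:ℝ) := by
      rw [← Finset.sum_add_distrib, Finset.sum_congr rfl (fun i _ => h1 i),
        Finset.sum_const, Finset.card_univ, Fintype.card_fin, nsmul_eq_mul]
    rw [← mul_add, h2, inv_mul_cancel_left₀ hvne]
  -- ===================== entropy values per case =====================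
  have hcase1fun : ∀ S : Finset (Fin 4), (∀ w, N S w = 1) →
      jointEntropy p S = 2 * Real.log v := by
    intro S h
    rw [hJE]
    rw [Finset.sum_congr rfl (fun w _ => by rw [h w] :
      ∀ w ∈ (Finset.univ : Finset (Fin v × Fin v)),
        Real.log ((N S w : ℕ) : ℝ) = Real.log ((1 : ℕ) : ℝ))]
    simp
  have hcasev : ∀ S : Finset (Fin 4), (∀ w, N S w = v) →
      jointEntropy p S = Real.log v := by
    intro S h
    rw [hJE]
    rw [Finset.sum_congr rfl (fun w _ => by rw [h w] :
      ∀ w ∈ (Finset.univ : Finset (Fin v × Fin v)),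
        Real.log ((N S w : ℕ) : ℝ) = Real.log ((v : ℕ) : ℝ))]
    rw [hsumconst, hv22]
    ring
  have hcaseE : jointEntropy p (∅ : Finset (Fin 4)) = 0 := by
    rw [hJE]
    rw [Finset.sum_congr rfl (fun w _ => by rw [hNe w] :
      ∀ w ∈ (Finset.univ : Finset (Fin v × Fin v)),
        Real.log ((N ∅ w : ℕ) : ℝ) = Real.log ((v * v : ℕ) : ℝ))]
    rw [hsumconst,
      show Real.log ((v * v : ℕ) : ℝ) = 2 * Real.log v from by
        push_cast; rw [Real.log_mul hvne hvne]; ring,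
      hv22]
    ring
  have hcase01' : jointEntropy p ({0, 1} : Finset (Fin 4))
      = 2 * Real.log v - (v:ℝ)⁻¹ * ∑ i, Real.log ((A i).card : ℝ) := by
    rw [hJE]
    rw [Finset.sum_congr rfl (fun w _ => by rw [hN01 w] :
      ∀ w ∈ (Finset.univ : Finset (Fin v × Fin v)),
        Real.log ((N ({0,1} : Finset (Fin 4)) w : ℕ) : ℝ)
          = Real.log (((A (sig w.1 w.2)).card : ℕ) : ℝ))]
    rw [hfiberA, ← Finset.mul_sum, hv21]
  have hcase02' : jointEntropy p ({0, 2} : Finset (Fin 4))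
      = 2 * Real.log v - (v:ℝ)⁻¹ * ∑ i, Real.log ((B i).card : ℝ) := by
    rw [hJE]
    rw [Finset.sum_congr rfl (fun w _ => by rw [hN02 w] :
      ∀ w ∈ (Finset.univ : Finset (Fin v × Fin v)),
        Real.log ((N ({0,2} : Finset (Fin 4)) w : ℕ) : ℝ)
          = Real.log (((B (sig w.1 w.2)).card : ℕ) : ℝ))]
    rw [hfiberB, ← Finset.mul_sum, hv21]

  -- rank values
  have hr12one : ∀ S : Finset (Fin 4), S ≠ ∅ → S ⊆ ({0,1} : Finset (Fin 4)) → rW12 S = 1 := by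
    intro S h1 h2; unfold rW12; rw [if_neg h1, if_pos h2]
  have hr13one : ∀ S : Finset (Fin 4), S ≠ ∅ → S ⊆ ({0,2} : Finset (Fin 4)) → rW13 S = 1 := by
    intro S h1 h2; unfold rW13; rw [if_neg h1, if_pos h2]
  have hr12two : ∀ S : Finset (Fin 4), S ≠ ∅ → ¬ (S ⊆ ({0,1} : Finset (Fin 4))) →
      2 ≤ S.card → rW12 S = 2 := by
    intro S h1 h2 h3; unfold rW12; rw [if_neg h1, if_neg h2]
    exact min_eq_left (by exact_mod_cast h3)
  have hr13two : ∀ S : Finset (Fin 4), S ≠ ∅ → ¬ (S ⊆ ({0,2} : Finset (Fin 4))) →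
      2 ≤ S.card → rW13 S = 2 := by
    intro S h1 h2 h3; unfold rW13; rw [if_neg h1, if_neg h2]
    exact min_eq_left (by exact_mod_cast h3)
  have hr12sing : ∀ S : Finset (Fin 4), S ≠ ∅ → ¬ (S ⊆ ({0,1} : Finset (Fin 4))) →
      S.card = 1 → rW12 S = 1 := by
    intro S h1 h2 h3; unfold rW12; rw [if_neg h1, if_neg h2, h3]
    norm_num
  have hr13sing : ∀ S : Finset (Fin 4), S ≠ ∅ → ¬ (S ⊆ ({0,2} : Finset (Fin 4))) →
      S.card = 1 → rW13 S = 1 := by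
    intro S h1 h2 h3; unfold rW13; rw [if_neg h1, if_neg h2, h3]
    norm_num
  -- counts for supersets
  have hN012 : ∀ w, N ({0,1,2} : Finset (Fin 4)) w = 1 :=
    fun w => hNmono {1,2} {0,1,2} w (by decide) (hN12 w)
  have hN013 : ∀ w, N ({0,1,3} : Finset (Fin 4)) w = 1 :=
    fun w => hNmono {1,3} {0,1,3} w (by decide) (hN13 w)
  have hN023 : ∀ w, N ({0,2,3} : Finset (Fin 4)) w = 1 :=
    fun w => hNmono {2,3} {0,2,3} w (by decide) (hN23 w)
  have hN123 : ∀ w, N ({1,2,3} : Finset (Fin 4)) w = 1 :=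
    fun w => hNmono {1,2} {1,2,3} w (by decide) (hN12 w)
  have hNall : ∀ w, N ({0,1,2,3} : Finset (Fin 4)) w = 1 :=
    fun w => hNmono {1,2} {0,1,2,3} w (by decide) (hN12 w)
  -- assemble
  refine ⟨fun _ => v, p, ⟨?_, ?_⟩, ?_⟩
  · intro z
    exact mul_nonneg (inv_nonneg.mpr (by positivity)) (Nat.cast_nonneg _)
  · have h1 : ∑ z : Fin 4 → Fin v, p z
        = ∑ z : Fin 4 → Fin v, ((Finset.univ.filter (fun w => f w = z)).card : ℝ)
            * (((v:ℝ)^2)⁻¹ * 1) := by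
      refine Finset.sum_congr rfl fun z _ => ?_
      rw [hpdef]; ring
    rw [h1, hre fun _ => ((v:ℝ)^2)⁻¹ * 1, hsumconst]
    field_simp
  · intro S
    have c00 : jointEntropy p (∅ : Finset (Fin 4)) =
        (Real.log v - (v : ℝ)⁻¹ * ∑ i, Real.log ((B i).card : ℝ)) * rW12 ∅ +
        (Real.log v - (v : ℝ)⁻¹ * ∑ i, Real.log ((A i).card : ℝ)) * rW13 ∅ := by
      rw [hcaseE]
      unfold rW12 rW13
      rw [if_pos rfl, if_pos rfl]
      ring
    have c0 : jointEntropy p ({0} : Finset (Fin 4)) =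
        (Real.log v - (v : ℝ)⁻¹ * ∑ i, Real.log ((B i).card : ℝ)) * rW12 {0} +
        (Real.log v - (v : ℝ)⁻¹ * ∑ i, Real.log ((A i).card : ℝ)) * rW13 {0} := by
      rw [hcasev _ hN0, hr12one _ (by decide) (by decide), hr13one _ (by decide) (by decide)]
      linarith [hsum']
    have c1 : jointEntropy p ({1} : Finset (Fin 4)) =
        (Real.log v - (v : ℝ)⁻¹ * ∑ i, Real.log ((B i).card : ℝ)) * rW12 {1} +
        (Real.log v - (v : ℝ)⁻¹ * ∑ i, Real.log ((A i).card : ℝ)) * rW13 {1} := by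
      rw [hcasev _ hN1', hr12one _ (by decide) (by decide),
        hr13sing _ (by decide) (by decide) (by decide)]
      linarith [hsum']
    have c2 : jointEntropy p ({2} : Finset (Fin 4)) =
        (Real.log v - (v : ℝ)⁻¹ * ∑ i, Real.log ((B i).card : ℝ)) * rW12 {2} +
        (Real.log v - (v : ℝ)⁻¹ * ∑ i, Real.log ((A i).card : ℝ)) * rW13 {2} := by
      rw [hcasev _ hN2', hr12sing _ (by decide) (by decide) (by decide),
        hr13one _ (by decide) (by decide)]
      linarith [hsum']
    have c3 : jointEntropy p ({3} : Finset (Fin 4)) =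
        (Real.log v - (v : ℝ)⁻¹ * ∑ i, Real.log ((B i).card : ℝ)) * rW12 {3} +
        (Real.log v - (v : ℝ)⁻¹ * ∑ i, Real.log ((A i).card : ℝ)) * rW13 {3} := by
      rw [hcasev _ hN3', hr12sing _ (by decide) (by decide) (by decide),
        hr13sing _ (by decide) (by decide) (by decide)]
      linarith [hsum']
    have c01 : jointEntropy p ({0,1} : Finset (Fin 4)) =
        (Real.log v - (v : ℝ)⁻¹ * ∑ i, Real.log ((B i).card : ℝ)) * rW12 {0,1} +
        (Real.log v - (v : ℝ)⁻¹ * ∑ i, Real.log ((A i).card : ℝ)) * rW13 {0,1} := by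
      rw [hcase01', hr12one _ (by decide) (by decide),
        hr13two _ (by decide) (by decide) (by decide)]
      linarith [hsum']
    have c02 : jointEntropy p ({0,2} : Finset (Fin 4)) =
        (Real.log v - (v : ℝ)⁻¹ * ∑ i, Real.log ((B i).card : ℝ)) * rW12 {0,2} +
        (Real.log v - (v : ℝ)⁻¹ * ∑ i, Real.log ((A i).card : ℝ)) * rW13 {0,2} := by
      rw [hcase02', hr12two _ (by decide) (by decide) (by decide),
        hr13one _ (by decide) (by decide)]
      linarith [hsum']
    have c03 : jointEntropy p ({0,3} : Finset (Fin 4)) =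
        (Real.log v - (v : ℝ)⁻¹ * ∑ i, Real.log ((B i).card : ℝ)) * rW12 {0,3} +
        (Real.log v - (v : ℝ)⁻¹ * ∑ i, Real.log ((A i).card : ℝ)) * rW13 {0,3} := by
      rw [hcase1fun _ hN03, hr12two _ (by decide) (by decide) (by decide),
        hr13two _ (by decide) (by decide) (by decide)]
      linarith [hsum']
    have c12 : jointEntropy p ({1,2} : Finset (Fin 4)) =
        (Real.log v - (v : ℝ)⁻¹ * ∑ i, Real.log ((B i).card : ℝ)) * rW12 {1,2} +
        (Real.log v - (v : ℝ)⁻¹ * ∑ i, Real.log ((A i).card : ℝ)) * rW13 {1,2} := by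
      rw [hcase1fun _ hN12, hr12two _ (by decide) (by decide) (by decide),
        hr13two _ (by decide) (by decide) (by decide)]
      linarith [hsum']
    have c13 : jointEntropy p ({1,3} : Finset (Fin 4)) =
        (Real.log v - (v : ℝ)⁻¹ * ∑ i, Real.log ((B i).card : ℝ)) * rW12 {1,3} +
        (Real.log v - (v : ℝ)⁻¹ * ∑ i, Real.log ((A i).card : ℝ)) * rW13 {1,3} := by
      rw [hcase1fun _ hN13, hr12two _ (by decide) (by decide) (by decide),
        hr13two _ (by decide) (by decide) (by decide)]
      linarith [hsum']
    have c23 : jointEntropy p ({2,3} : Finset (Fin 4)) =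
        (Real.log v - (v : ℝ)⁻¹ * ∑ i, Real.log ((B i).card : ℝ)) * rW12 {2,3} +
        (Real.log v - (v : ℝ)⁻¹ * ∑ i, Real.log ((A i).card : ℝ)) * rW13 {2,3} := by
      rw [hcase1fun _ hN23, hr12two _ (by decide) (by decide) (by decide),
        hr13two _ (by decide) (by decide) (by decide)]
      linarith [hsum']
    have c012 : jointEntropy p ({0,1,2} : Finset (Fin 4)) =
        (Real.log v - (v : ℝ)⁻¹ * ∑ i, Real.log ((B i).card : ℝ)) * rW12 {0,1,2} +
        (Real.log v - (v : ℝ)⁻¹ * ∑ i, Real.log ((A i).card : ℝ)) * rW13 {0,1,2} := by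
      rw [hcase1fun _ hN012, hr12two _ (by decide) (by decide) (by decide),
        hr13two _ (by decide) (by decide) (by decide)]
      linarith [hsum']
    have c013 : jointEntropy p ({0,1,3} : Finset (Fin 4)) =
        (Real.log v - (v : ℝ)⁻¹ * ∑ i, Real.log ((B i).card : ℝ)) * rW12 {0,1,3} +
        (Real.log v - (v : ℝ)⁻¹ * ∑ i, Real.log ((A i).card : ℝ)) * rW13 {0,1,3} := by
      rw [hcase1fun _ hN013, hr12two _ (by decide) (by decide) (by decide),
        hr13two _ (by decide) (by decide) (by decide)]
      linarith [hsum']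
    have c023 : jointEntropy p ({0,2,3} : Finset (Fin 4)) =
        (Real.log v - (v : ℝ)⁻¹ * ∑ i, Real.log ((B i).card : ℝ)) * rW12 {0,2,3} +
        (Real.log v - (v : ℝ)⁻¹ * ∑ i, Real.log ((A i).card : ℝ)) * rW13 {0,2,3} := by
      rw [hcase1fun _ hN023, hr12two _ (by decide) (by decide) (by decide),
        hr13two _ (by decide) (by decide) (by decide)]
      linarith [hsum']
    have c123 : jointEntropy p ({1,2,3} : Finset (Fin 4)) =
        (Real.log v - (v : ℝ)⁻¹ * ∑ i, Real.log ((B i).card : ℝ)) * rW12 {1,2,3} +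
        (Real.log v - (v : ℝ)⁻¹ * ∑ i, Real.log ((A i).card : ℝ)) * rW13 {1,2,3} := by
      rw [hcase1fun _ hN123, hr12two _ (by decide) (by decide) (by decide),
        hr13two _ (by decide) (by decide) (by decide)]
      linarith [hsum']
    have call : jointEntropy p ({0,1,2,3} : Finset (Fin 4)) =
        (Real.log v - (v : ℝ)⁻¹ * ∑ i, Real.log ((B i).card : ℝ)) * rW12 {0,1,2,3} +
        (Real.log v - (v : ℝ)⁻¹ * ∑ i, Real.log ((A i).card : ℝ)) * rW13 {0,1,2,3} := by
      rw [hcase1fun _ hNall, hr12two _ (by decide) (by decide) (by decide),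
        hr13two _ (by decide) (by decide) (by decide)]
      linarith [hsum']
    have key : S = ∅ ∨ S = {0} ∨ S = {1} ∨ S = {2} ∨ S = {3} ∨ S = {0,1} ∨ S = {0,2} ∨
        S = {0,3} ∨ S = {1,2} ∨ S = {1,3} ∨ S = {2,3} ∨ S = {0,1,2} ∨ S = {0,1,3} ∨
        S = {0,2,3} ∨ S = {1,2,3} ∨ S = {0,1,2,3} := by
      revert S; decide
    rcases key with rfl|rfl|rfl|rfl|rfl|rfl|rfl|rfl|rfl|rfl|rfl|rfl|rfl|rfl|rfl|rfl
    · exact c00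
    · exact c0
    · exact c1
    · exact c2
    · exact c3
    · exact c01
    · exact c02
    · exact c03
    · exact c12
    · exact c13
    · exact c23
    · exact c012
    · exact c013
    · exact c023
    · exact c123
    · exact call
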